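/- Let r be a positive integer and let Z be a Gaussian integer such that gcd(gcd(Z.re, Z.im), r) = 1 and r^2 divides the norm of Z (where the norm of x + iy is x^2 + y^2). Let X = gcd(Z, r) computed in the Euclidean domain ℤ[i]. Then: (i) the norm of X equals r; (ii) there exists Z' ∈ ℤ[i] with (star X)^2 * Z = r^2 * Z'; and (iii) for every Q ∈ ℤ[i] such that r^2 divides the norm of (r·Q − Z), there exists Q' ∈ ℤ[i] with (star X)^2 * Q = r * Q'. -/

import Mathlib

private theorem gaussian_star_intCast (n : ℤ) : star ((n : ℤ) : GaussianInt) = (n : GaussianInt) := by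
  ext <;> simp [Zsqrtd.re_star, Zsqrtd.im_star]

private theorem gaussian_star_dvd {a b : GaussianInt} (h : a ∣ b) : star a ∣ star b := by
  obtain ⟨c, rfl⟩ := h; exact ⟨star c, by rw [star_mul, mul_comm]⟩

open EuclideanDomain in
/-- Key step of the lattice-embedding theorem in the plane, via Gaussian-integer GCD.
`Z` represents `r` times a rational point with LCD `r`. -/
theorem gaussian_gcd_embedding_step (r : ℤ) (hr : 0 < r) (Z : GaussianInt)
    (hprim : Int.gcd (Int.gcd Z.re Z.im) r = 1)
    (hdvd : r ^ 2 ∣ Zsqrtd.norm Z)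
    (X : GaussianInt) (hX : X = EuclideanDomain.gcd Z (r : GaussianInt)) :
    Zsqrtd.norm X = r ∧
    (∃ Z' : GaussianInt, (star X) ^ 2 * Z = (r : GaussianInt) ^ 2 * Z') ∧
    (∀ Q : GaussianInt, r ^ 2 ∣ Zsqrtd.norm ((r : GaussianInt) * Q - Z) →
      ∃ Q' : GaussianInt, (star X) ^ 2 * Q = (r : GaussianInt) * Q') := by
  have hXZ : X ∣ Z := hX ▸ gcd_dvd_left _ _
  have hXr : X ∣ (r : GaussianInt) := hX ▸ gcd_dvd_right _ _
  -- r is odd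
  have hrodd : ¬ (2 : ℤ) ∣ r := by
    intro h2
    have h4 : (4 : ℤ) ∣ Z.re ^ 2 + Z.im ^ 2 := by
      have h4r : (4 : ℤ) ∣ r ^ 2 := by
        obtain ⟨c, rfl⟩ := h2; exact ⟨c ^ 2, by ring⟩
      refine h4r.trans (hdvd.trans ?_)
      have : Zsqrtd.norm Z = Z.re ^ 2 + Z.im ^ 2 := by
        simp [Zsqrtd.norm]; ring
      rw [this]
    have hrem : Z.re % 2 = 0 ∧ Z.im % 2 = 0 := by
      obtain ⟨c, hc⟩ := h4
      have hre : Z.re = 2 * (Z.re / 2) + Z.re % 2 := (Int.mul_ediv_add_emod Z.re 2).symm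
      have him : Z.im = 2 * (Z.im / 2) + Z.im % 2 := (Int.mul_ediv_add_emod Z.im 2).symm
      set a := Z.re / 2 with ha
      set s := Z.re % 2 with hsd
      set b := Z.im / 2 with hb
      set t := Z.im % 2 with htd
      have key : (4 : ℤ) ∣ s * s + t * t :=
        ⟨c - a * a - a * s - b * b - b * t, by
          linear_combination hc - (Z.re + 2 * a + s) * hre - (Z.im + 2 * b + t) * him⟩
      have hs : s = 0 ∨ s = 1 := Int.emod_two_eq Z.re
      have ht : t = 0 ∨ t = 1 := Int.emod_two_eq Z.im
      rcases hs with hs | hs <;> rcases ht with ht | ht <;> rw [hs, ht] at key ⊢ <;> omega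
    have hre2 : (2 : ℤ) ∣ Z.re := Int.dvd_of_emod_eq_zero hrem.1
    have him2 : (2 : ℤ) ∣ Z.im := Int.dvd_of_emod_eq_zero hrem.2
    have hg : (2 : ℤ) ∣ (Int.gcd Z.re Z.im : ℤ) := Int.dvd_coe_gcd hre2 him2
    have := Int.dvd_coe_gcd hg h2
    rw [hprim] at this
    norm_num at this
  have hcopr2 : IsCoprime (2 : ℤ) r := ⟨-(r / 2), 1, by omega⟩
  -- coprimality of X and star X
  have hcop : IsCoprime X (star X) := by
    rw [← EuclideanDomain.gcd_isUnit_iff]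
    set g := EuclideanDomain.gcd X (star X) with hg
    have hgX : g ∣ X := gcd_dvd_left _ _
    have hgXs : g ∣ star X := gcd_dvd_right _ _
    have hgZ : g ∣ Z := hgX.trans hXZ
    have hgr : g ∣ (r : GaussianInt) := hgX.trans hXr
    have hgZs : g ∣ star Z := hgXs.trans (gaussian_star_dvd hXZ)
    have hg2re : g ∣ ((2 * Z.re : ℤ) : GaussianInt) := by
      have : ((2 * Z.re : ℤ) : GaussianInt) = Z + star Z := by
        ext <;> simp [Zsqrtd.re_star, Zsqrtd.im_star] <;> ring
      rw [this]; exact dvd_add hgZ hgZs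
    have hg2im : g ∣ ((2 * Z.im : ℤ) : GaussianInt) := by
      have hi : ((2 * Z.im : ℤ) : GaussianInt) = (Z - star Z) * ⟨0, -1⟩ := by
        ext <;> simp [Zsqrtd.re_star, Zsqrtd.im_star, Zsqrtd.re_mul, Zsqrtd.im_mul] <;> ring
      rw [hi]; exact (dvd_sub hgZ hgZs).mul_right _
    -- Bezout over ℤ from hprim
    have hcop1 : IsCoprime (Int.gcd Z.re Z.im : ℤ) r := Int.isCoprime_iff_gcd_eq_one.2 hprim
    obtain ⟨u, v, huv⟩ := hcop1
    have hbez : (Int.gcd Z.re Z.im : ℤ) = Z.re * Int.gcdA Z.re Z.im + Z.im * Int.gcdB Z.re Z.im :=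
      Int.gcd_eq_gcd_ab _ _
    have h1 : (u * (Z.re * Int.gcdA Z.re Z.im + Z.im * Int.gcdB Z.re Z.im) + v * r : ℤ) = 1 := by
      rw [← hbez]; exact huv
    have h1' := congrArg (fun t : ℤ => ((t : GaussianInt))) h1
    push_cast at h1'
    have h2 : g ∣ (2 : GaussianInt) := by
      have heq : (2 : GaussianInt) =
          ((2 * Z.re : ℤ) : GaussianInt) * ((u * Int.gcdA Z.re Z.im : ℤ) : GaussianInt) +
          ((2 * Z.im : ℤ) : GaussianInt) * ((u * Int.gcdB Z.re Z.im : ℤ) : GaussianInt) +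
          (r : GaussianInt) * ((2 * v : ℤ) : GaussianInt) := by
        push_cast
        linear_combination (-2 : GaussianInt) * h1'
      rw [heq]
      exact dvd_add (dvd_add (hg2re.mul_right _) (hg2im.mul_right _)) (hgr.mul_right _)
    have hcop2r : IsCoprime (2 : GaussianInt) ((r : ℤ) : GaussianInt) := by
      have := hcopr2.map (Int.castRingHom GaussianInt)
      simpa using this
    exact hcop2r.isUnit_of_dvd' h2 hgr
  have hr2 : r ∣ Zsqrtd.norm Z := dvd_trans ⟨r, (sq r)⟩ hdvd
  -- r ∣ norm X via Bezout
  have hbezX : X = Z * gcdA Z (r : GaussianInt) + (r : GaussianInt) * gcdB Z (r : GaussianInt) := by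
    rw [hX]; exact gcd_eq_gcd_ab _ _
  have hrNX : (r : GaussianInt) ∣ X * star X := by
    have h1 : X * star X = (Z * star Z) * (gcdA Z (r : GaussianInt) * star (gcdA Z (r : GaussianInt)))
        + (r : GaussianInt) * (Z * gcdA Z (r : GaussianInt) * star (gcdB Z (r : GaussianInt))
          + star Z * star (gcdA Z (r : GaussianInt)) * gcdB Z (r : GaussianInt)
          + (r : GaussianInt) * (gcdB Z (r : GaussianInt) * star (gcdB Z (r : GaussianInt)))) := by
      conv_lhs => rw [hbezX]
      simp only [star_add, star_mul, gaussian_star_intCast]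
      ring
    rw [h1, ← Zsqrtd.norm_eq_mul_conj]
    exact dvd_add (((Zsqrtd.intCast_dvd_intCast _ _).2 hr2).mul_right _) (dvd_mul_right _ _)
  have hXsr : star X ∣ (r : GaussianInt) := by
    have := gaussian_star_dvd hXr
    simpa using this
  have hNXr : (X * star X) ∣ (r : GaussianInt) := hcop.mul_dvd hXr hXsr
  have hNX : Zsqrtd.norm X = r := by
    have h1 : Zsqrtd.norm X ∣ r := by
      rw [← Zsqrtd.intCast_dvd_intCast (d := -1), Zsqrtd.norm_eq_mul_conj]
      exact hNXr
    have h2 : r ∣ Zsqrtd.norm X := by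
      rw [← Zsqrtd.intCast_dvd_intCast (d := -1), Zsqrtd.norm_eq_mul_conj]
      exact hrNX
    exact Int.dvd_antisymm (Zsqrtd.norm_nonneg (by norm_num) X) hr.le h1 h2
  have hXX : X * star X = (r : GaussianInt) := by
    rw [← Zsqrtd.norm_eq_mul_conj, hNX]
  have hX0 : X ≠ 0 := by
    intro h; rw [h, Zsqrtd.norm_zero] at hNX; omega
  -- Z = X * Y with IsCoprime Y (star X)
  obtain ⟨Y, hY⟩ := hXZ
  have hcopY : IsCoprime Y (star X) := by
    set A := gcdA Z (r : GaussianInt) with hA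
    set B := gcdB Z (r : GaussianInt) with hB
    have h1 : X * 1 = X * (Y * A + star X * B) := by
      rw [mul_one]
      calc X = Z * A + (r : GaussianInt) * B := hbezX
        _ = X * (Y * A + star X * B) := by rw [hY, ← hXX]; ring
    have h2 := mul_left_cancel₀ hX0 h1
    exact ⟨A, B, by linear_combination h2.symm⟩
  -- X ∣ Y
  have hXY : X ∣ Y := by
    have hrNY : r ∣ Zsqrtd.norm Y := by
      have hn : Zsqrtd.norm Z = Zsqrtd.norm X * Zsqrtd.norm Y := by rw [hY, Zsqrtd.norm_mul]
      rw [hn, hNX, sq] at hdvd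
      exact (mul_dvd_mul_iff_left hr.ne').1 hdvd
    have hdY : X ∣ Y * star Y := by
      refine dvd_trans ⟨star X, hXX.symm⟩ ?_
      rw [← Zsqrtd.norm_eq_mul_conj]
      exact (Zsqrtd.intCast_dvd_intCast _ _).2 hrNY
    have hcopYs : IsCoprime X (star Y) := by
      obtain ⟨a, b, hab⟩ := hcopY
      have hstar := congrArg star hab
      simp only [star_add, star_mul, star_star, star_one] at hstar
      exact ⟨star b, star a, by rw [← hstar]; ring⟩
    exact hcopYs.dvd_of_dvd_mul_right hdY
  obtain ⟨Y2, hY2⟩ := hXY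
  have hZX2 : Z = X ^ 2 * Y2 := by rw [hY, hY2]; ring
  refine ⟨hNX, ⟨Y2, ?_⟩, ?_⟩
  · rw [hZX2, ← hXX]; ring
  · intro Q hQ
    set W : GaussianInt := (r : GaussianInt) * Q - Z with hW
    -- IsCoprime X (star W)
    have hcopW : IsCoprime X (star W) := by
      rw [← EuclideanDomain.gcd_isUnit_iff]
      set g := EuclideanDomain.gcd X (star W) with hg
      have hgX : g ∣ X := gcd_dvd_left _ _
      have hgW : g ∣ star W := gcd_dvd_right _ _
      have hgr : g ∣ (r : GaussianInt) := hgX.trans hXr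
      have hgZs : g ∣ star Z := by
        have heq : star Z = (r : GaussianInt) * star Q - star W := by
          rw [hW]; simp only [star_sub, star_mul, gaussian_star_intCast]; ring
        rw [heq]
        exact dvd_sub (hgr.mul_right _) hgW
      have hgXs : g ∣ star X := by
        have h1 : star g ∣ Z := by simpa using gaussian_star_dvd hgZs
        have h2 : star g ∣ (r : GaussianInt) := by simpa using gaussian_star_dvd hgr
        have h3 : star g ∣ X := hX ▸ dvd_gcd h1 h2
        simpa using gaussian_star_dvd h3
      exact hcop.isUnit_of_dvd' hgX hgXs
    -- X^2 ∣ W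
    have hX2W : X ^ 2 ∣ W := by
      have h1 : X ^ 2 ∣ W * star W := by
        have h2 : ((r : GaussianInt)) ^ 2 ∣ W * star W := by
          rw [← Zsqrtd.norm_eq_mul_conj]
          have := (Zsqrtd.intCast_dvd_intCast (d := -1) _ _).2 hQ
          push_cast at this
          exact this
        refine dvd_trans ⟨(star X) ^ 2, by rw [← hXX]; ring⟩ h2
      exact hcopW.pow_left.dvd_of_dvd_mul_right h1
    have hX2rQ : X ^ 2 ∣ (r : GaussianInt) * Q := by
      have heq : (r : GaussianInt) * Q = W + Z := by rw [hW]; ring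
      rw [heq]
      exact dvd_add hX2W ⟨Y2, hZX2⟩
    -- X ∣ Q
    have hXQ : X ∣ Q := by
      obtain ⟨T, hT⟩ := hX2rQ
      have h1 : X * (star X * Q) = X * (X * T) := by
        rw [← mul_assoc, hXX, hT]; ring
      have h2 := mul_left_cancel₀ hX0 h1
      exact hcop.dvd_of_dvd_mul_left ⟨T, h2⟩
    obtain ⟨Q2, hQ2⟩ := hXQ
    exact ⟨star X * Q2, by rw [hQ2, ← hXX]; ring⟩
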